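/- Let a, b ∈ ℂ. Then there is an open neighborhood U of 0 in ℂ such that the function g(x) = ₂F₁(a, b; 1/2; x(4x-3)²) satisfies Heun's differential equation with parameters (t, q; a', b'; c'; d') = (1/4, 9ab/4; 3a, 3b; 1/2; a+b+1/2) at every x ∈ U with x ∉ {0, 1, 1/4}. -/

import Mathlib

open Complex

namespace HeunAux

open FormalMultilinearSeries

/-- Evaluation at `1` as a continuous linear map. -/
noncomputable def E1 : (ℂ →L[ℂ] ℂ) →L[ℂ] ℂ := ContinuousLinearMap.apply ℂ ℂ 1

/-- The (scalar) derivative series of a one-dimensional formal multilinear series. -/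
noncomputable def dS (P : FormalMultilinearSeries ℂ ℂ ℂ) : FormalMultilinearSeries ℂ ℂ ℂ :=
  E1.compFormalMultilinearSeries P.derivSeries

lemma dS_coeff (P : FormalMultilinearSeries ℂ ℂ ℂ) (n : ℕ) :
    (dS P).coeff n = ((n : ℂ) + 1) * P.coeff (n + 1) := by
  have h := P.derivSeries_apply_diag n (1 : ℂ)
  have h2 : (dS P).coeff n = P.derivSeries n (fun _ ↦ (1 : ℂ)) 1 := rfl
  have h3 : P.coeff (n + 1) = (P (n + 1) fun _ ↦ (1 : ℂ)) := rfl
  rw [h2, h, h3, nsmul_eq_mul]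
  push_cast
  ring

lemma dS_hasFPowerSeriesOnBall {f : ℂ → ℂ} {P : FormalMultilinearSeries ℂ ℂ ℂ} {r : ENNReal}
    (h : HasFPowerSeriesOnBall f P 0 r) :
    HasFPowerSeriesOnBall (deriv f) (dS P) 0 r := by
  have h1 := E1.comp_hasFPowerSeriesOnBall h.fderiv
  have h2 : (⇑E1 ∘ fderiv ℂ f) = deriv f := by
    funext z
    exact fderiv_apply_one_eq_deriv
  rwa [h2] at h1

lemma mem_ball_one {z : ℂ} (hz : ‖z‖ < 1) : z ∈ EMetric.ball (0 : ℂ) 1 := by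
  show edist z 0 < 1
  rw [edist_eq_enorm_sub, sub_zero, ← ofReal_norm]
  exact ENNReal.ofReal_lt_one.mpr hz

/-- The scalar coefficients of the hypergeometric series with `c = 1/2`. -/
noncomputable def cc (a b : ℂ) (n : ℕ) : ℂ :=
  ((Nat.factorial n : ℕ) : ℂ)⁻¹ * (ascPochhammer ℂ n).eval a * (ascPochhammer ℂ n).eval b *
    ((ascPochhammer ℂ n).eval (1/2 : ℂ))⁻¹

variable (a b : ℂ)

lemma nat_ne_neg_half (k : ℕ) : (k : ℂ) ≠ -(1/2) := by
  intro h
  have h2 := congrArg Complex.re h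
  simp at h2
  have h3 : (0:ℝ) ≤ (k : ℝ) := Nat.cast_nonneg k
  rw [h2] at h3
  norm_num at h3

lemma poch_half_ne_zero (n : ℕ) : (ascPochhammer ℂ n).eval (1/2 : ℂ) ≠ 0 := by
  rw [Ne, ascPochhammer_eval_eq_zero_iff]
  rintro ⟨k, -, hk⟩
  exact nat_ne_neg_half k hk

lemma coeff_hyp (n : ℕ) :
    (ordinaryHypergeometricSeries ℂ a b (1/2)).coeff n = cc a b n := by
  have := ordinaryHypergeometricSeries_apply_eq a b (1/2 : ℂ) (1 : ℂ) n
  have h2 : (ordinaryHypergeometricSeries ℂ a b (1/2)).coeff n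
      = (ordinaryHypergeometricSeries ℂ a b (1/2) n fun _ => (1 : ℂ)) := rfl
  rw [h2, this]; unfold cc
  simp

lemma cc_rec (n : ℕ) :
    ((n : ℂ) + 1) * ((n : ℂ) + 1/2) * cc a b (n + 1)
      = ((n : ℂ) + a) * ((n : ℂ) + b) * cc a b n := by
  have hfac : ((Nat.factorial (n + 1) : ℕ) : ℂ) = ((n : ℂ) + 1) * ((Nat.factorial n : ℕ) : ℂ) := by
    rw [Nat.factorial_succ]; push_cast; ring
  have hfn : ((Nat.factorial n : ℕ) : ℂ) ≠ 0 :=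
    Nat.cast_ne_zero.mpr (Nat.factorial_ne_zero n)
  have hfn1 : ((n : ℂ) + 1) ≠ 0 := by
    have hcast : ((n : ℂ) + 1) = ((n + 1 : ℕ) : ℂ) := by push_cast; ring
    rw [hcast]
    exact Nat.cast_ne_zero.mpr (Nat.succ_ne_zero n)
  have hC : (ascPochhammer ℂ n).eval (1/2 : ℂ) ≠ 0 := poch_half_ne_zero n
  have hCn : (1/2 : ℂ) + n ≠ 0 := by
    intro h
    exact nat_ne_neg_half n (by linear_combination h)
  have key : cc a b (n + 1) = cc a b n * ((a + n) * (b + n)) * (((n : ℂ) + 1)⁻¹ * ((1/2 : ℂ) + n)⁻¹) := by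
    unfold cc
    rw [ascPochhammer_succ_eval, ascPochhammer_succ_eval, ascPochhammer_succ_eval, hfac,
      mul_inv, mul_inv]
    ring
  rw [key]
  have h1 : ((n : ℂ) + 1) * ((n : ℂ) + 1/2) *
        (cc a b n * ((a + (n : ℂ)) * (b + (n : ℂ))) * (((n : ℂ) + 1)⁻¹ * ((1/2 : ℂ) + n)⁻¹))
      = cc a b n * ((a + (n : ℂ)) * (b + (n : ℂ))) * (((n : ℂ) + 1) * ((n : ℂ) + 1)⁻¹) *
        (((1/2 : ℂ) + n) * ((1/2 : ℂ) + n)⁻¹) := by ring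
  rw [h1, mul_inv_cancel₀ hfn1, mul_inv_cancel₀ hCn]
  ring

/-- Abbreviation for the hypergeometric function with `c = 1/2`. -/
noncomputable def F : ℂ → ℂ := fun z => ordinaryHypergeometric a b (1/2 : ℂ) z

lemma radius_ge_one : 1 ≤ (ordinaryHypergeometricSeries ℂ a b (1/2)).radius := by
  by_cases h : ∀ kn : ℕ, (kn : ℂ) ≠ -a ∧ (kn : ℂ) ≠ -b ∧ (kn : ℂ) ≠ -(1/2 : ℂ)
  · exact le_of_eq (ordinaryHypergeometricSeries_radius_eq_one ℂ a b (1/2) h).symm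
  · push_neg at h
    obtain ⟨k, hk⟩ := h
    rcases Classical.em ((k : ℂ) = -a) with ha | ha
    · have : a = -(k : ℂ) := by linear_combination ha
      rw [this]
      rw [ordinaryHypergeometric_radius_top_of_neg_nat₁]
      exact le_top
    rcases Classical.em ((k : ℂ) = -b) with hb | hb
    · have : b = -(k : ℂ) := by linear_combination hb
      rw [this]
      rw [ordinaryHypergeometric_radius_top_of_neg_nat₂]
      exact le_top
    · exact absurd (hk ha hb) (nat_ne_neg_half k)

lemma hpF : HasFPowerSeriesOnBall (F a b) (ordinaryHypergeometricSeries ℂ a b (1/2)) 0 1 := by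
  have h0 : (0 : ENNReal) < (ordinaryHypergeometricSeries ℂ a b (1/2)).radius :=
    lt_of_lt_of_le one_pos (radius_ge_one a b)
  exact ((ordinaryHypergeometricSeries ℂ a b (1/2)).hasFPowerSeriesOnBall h0).mono one_pos
    (radius_ge_one a b)

lemma hpF1 : HasFPowerSeriesOnBall (deriv (F a b))
    (dS (ordinaryHypergeometricSeries ℂ a b (1/2))) 0 1 :=
  dS_hasFPowerSeriesOnBall (hpF a b)

lemma hpF2 : HasFPowerSeriesOnBall (deriv (deriv (F a b)))
    (dS (dS (ordinaryHypergeometricSeries ℂ a b (1/2)))) 0 1 :=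
  dS_hasFPowerSeriesOnBall (hpF1 a b)

lemma diffF {z : ℂ} (hz : ‖z‖ < 1) : DifferentiableAt ℂ (F a b) z :=
  ((hpF a b).differentiableOn z (mem_ball_one hz)).differentiableAt
    (EMetric.isOpen_ball.mem_nhds (mem_ball_one hz))

lemma diffF1 {z : ℂ} (hz : ‖z‖ < 1) : DifferentiableAt ℂ (deriv (F a b)) z :=
  ((hpF1 a b).differentiableOn z (mem_ball_one hz)).differentiableAt
    (EMetric.isOpen_ball.mem_nhds (mem_ball_one hz))

lemma hs0 {z : ℂ} (hz : ‖z‖ < 1) :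
    HasSum (fun n : ℕ => cc a b n * z ^ n) (F a b z) := by
  have h := (hpF a b).hasSum (mem_ball_one hz)
  simp only [FormalMultilinearSeries.apply_eq_pow_smul_coeff, smul_eq_mul, zero_add,
    coeff_hyp] at h
  exact h.congr_fun fun n => by rw [mul_comm]

lemma hs1 {z : ℂ} (hz : ‖z‖ < 1) :
    HasSum (fun n : ℕ => ((n : ℂ) + 1) * cc a b (n + 1) * z ^ n) (deriv (F a b) z) := by
  have h := (hpF1 a b).hasSum (mem_ball_one hz)
  simp only [FormalMultilinearSeries.apply_eq_pow_smul_coeff, smul_eq_mul, zero_add,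
    dS_coeff, coeff_hyp] at h
  exact h.congr_fun fun n => by rw [mul_comm]

lemma hs2 {z : ℂ} (hz : ‖z‖ < 1) :
    HasSum (fun n : ℕ => ((n : ℂ) + 1) * (((n : ℂ) + 1 + 1) * cc a b (n + 1 + 1)) * z ^ n)
      (deriv (deriv (F a b)) z) := by
  have h := (hpF2 a b).hasSum (mem_ball_one hz)
  simp only [FormalMultilinearSeries.apply_eq_pow_smul_coeff, smul_eq_mul, zero_add,
    dS_coeff, coeff_hyp] at h
  exact h.congr_fun fun n => by push_cast; ring

lemma ode {z : ℂ} (hz : ‖z‖ < 1) :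
    z * (1 - z) * deriv (deriv (F a b)) z
      + (1/2 - (a + b + 1) * z) * deriv (F a b) z - a * b * F a b z = 0 := by
  set S0 := F a b z
  set S1 := deriv (F a b) z
  set S2 := deriv (deriv (F a b)) z
  -- t1 : z * S2
  have t1 : HasSum (fun n : ℕ => (n : ℂ) * ((n : ℂ) + 1) * cc a b (n + 1) * z ^ n) (z * S2) := by
    have h := (hs2 a b hz).mul_left z
    rw [show (fun n : ℕ => z * (((n : ℂ) + 1) * (((n : ℂ) + 1 + 1) * cc a b (n + 1 + 1)) * z ^ n))
        = (fun n : ℕ => (fun m : ℕ => (m : ℂ) * ((m : ℂ) + 1) * cc a b (m + 1) * z ^ m) (n + 1))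
        from funext fun n => by push_cast; ring] at h
    have h2 := (hasSum_nat_add_iff
      (f := fun m : ℕ => (m : ℂ) * ((m : ℂ) + 1) * cc a b (m + 1) * z ^ m) 1).mp h
    simpa using h2
  -- t2 : z^2 * S2
  have t2 : HasSum (fun n : ℕ => (n : ℂ) * ((n : ℂ) - 1) * cc a b n * z ^ n) (z ^ 2 * S2) := by
    have h := (hs2 a b hz).mul_left (z ^ 2)
    rw [show (fun n : ℕ => z ^ 2 * (((n : ℂ) + 1) * (((n : ℂ) + 1 + 1) * cc a b (n + 1 + 1)) * z ^ n))
        = (fun n : ℕ => (fun m : ℕ => (m : ℂ) * ((m : ℂ) - 1) * cc a b m * z ^ m) (n + 2))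
        from funext fun n => by push_cast; ring] at h
    have h2 := (hasSum_nat_add_iff
      (f := fun m : ℕ => (m : ℂ) * ((m : ℂ) - 1) * cc a b m * z ^ m) 2).mp h
    simpa [Finset.sum_range_succ] using h2
  -- t4 : z * S1
  have t4 : HasSum (fun n : ℕ => (n : ℂ) * cc a b n * z ^ n) (z * S1) := by
    have h := (hs1 a b hz).mul_left z
    rw [show (fun n : ℕ => z * (((n : ℂ) + 1) * cc a b (n + 1) * z ^ n))
        = (fun n : ℕ => (fun m : ℕ => (m : ℂ) * cc a b m * z ^ m) (n + 1))
        from funext fun n => by push_cast; ring] at h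
    have h2 := (hasSum_nat_add_iff
      (f := fun m : ℕ => (m : ℂ) * cc a b m * z ^ m) 1).mp h
    simpa using h2
  have comb := ((t1.sub t2).add (((hs1 a b hz).mul_left (1/2)).sub
      (t4.mul_left (a + b + 1)))).sub ((hs0 a b hz).mul_left (a * b))
  have hzero : (fun n : ℕ =>
      ((n : ℂ) * ((n : ℂ) + 1) * cc a b (n + 1) * z ^ n - (n : ℂ) * ((n : ℂ) - 1) * cc a b n * z ^ n
        + (1/2 * (((n : ℂ) + 1) * cc a b (n + 1) * z ^ n) - (a + b + 1) * ((n : ℂ) * cc a b n * z ^ n))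
        - a * b * (cc a b n * z ^ n))) = fun _ : ℕ => (0 : ℂ) := by
    funext n
    have h := cc_rec a b n
    linear_combination z ^ n * h
  rw [hzero] at comb
  have hval := comb.unique hasSum_zero
  linear_combination hval

lemma clear_div (A S D : ℂ) (hD : D ≠ 0) (h : S = -(A * D)) : A + S / D = 0 := by
  rw [h]
  field_simp
  ring

end HeunAux

/-- `g` satisfies Heun's differential equation with parameters `(t, q; a, b; c; d)`
at the point `x`: `g` is twice complex differentiable at `x` and
`g''(x) + (c/x + d/(x-1) + (a+b-c-d+1)/(x-t)) g'(x) + ((a b x - q)/(x(x-1)(x-t))) g(x) = 0`. -/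
def SatisfiesHeunAt (t q a b c d : ℂ) (g : ℂ → ℂ) (x : ℂ) : Prop :=
  DifferentiableAt ℂ g x ∧ DifferentiableAt ℂ (deriv g) x ∧
    deriv (deriv g) x +
      (c / x + d / (x - 1) + (a + b - c - d + 1) / (x - t)) * deriv g x +
      ((a * b * x - q) / (x * (x - 1) * (x - t))) * g x = 0

theorem stmt10 (a b : ℂ) :
    ∃ U : Set ℂ, IsOpen U ∧ (0 : ℂ) ∈ U ∧ ∀ x ∈ U, x ≠ (0 : ℂ) → x ≠ (1 : ℂ) → x ≠ (1/4 : ℂ) →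
      SatisfiesHeunAt (1/4) (9*a*b/4) (3*a) (3*b) (1/2) (a + b + 1/2)
        (fun x : ℂ => ordinaryHypergeometric a b (1/2) (x*(4*x-3)^2)) x := by
  classical
  refine ⟨{x : ℂ | ‖x*(4*x-3)^2‖ < 1} ∩ Metric.ball 0 (1/2), ?_, ?_, ?_⟩
  · exact (isOpen_lt (by fun_prop) continuous_const).inter Metric.isOpen_ball
  · constructor
    · simp
    · simp [Metric.mem_ball]
  intro x hxU hx0 hx1 hx4
  have hxn : ‖x‖ < 1/2 := by simpa [Metric.mem_ball] using hxU.2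
  have hzx : ‖x*(4*x-3)^2‖ < 1 := hxU.1
  have h43 : (4*x-3 : ℂ) ≠ 0 := by
    intro h
    have hx34 : x = 3/4 := by linear_combination h/4
    rw [hx34] at hxn
    have : ‖((3:ℂ)/4)‖ = 3/4 := by
      rw [show ((3:ℂ)/4) = (((3:ℝ)/4 : ℝ) : ℂ) by norm_num, Complex.norm_real]
      norm_num
    rw [this] at hxn
    norm_num at hxn
  have h41 : (4*x-1 : ℂ) ≠ 0 := fun h => hx4 (by linear_combination h/4)
  have hX1 : x - 1 ≠ 0 := sub_ne_zero.mpr hx1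
  have hX4 : x - 1/4 ≠ 0 := sub_ne_zero.mpr hx4
  have hz0 : x*(4*x-3)^2 ≠ 0 := mul_ne_zero hx0 (pow_ne_zero 2 h43)
  have hz1 : (1 : ℂ) - x*(4*x-3)^2 ≠ 0 := by
    have e : (1 : ℂ) - x*(4*x-3)^2 = -((x-1)*(4*x-1)^2) := by ring
    rw [e, neg_ne_zero]
    exact mul_ne_zero hX1 (pow_ne_zero 2 h41)
  -- derivative of the inner cubic
  have hpd : ∀ y : ℂ, HasDerivAt (fun t : ℂ => t*(4*t-3)^2) (3*(4*y-3)*(4*y-1)) y := by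
    intro y
    have h1 : HasDerivAt (fun t : ℂ => 4*t-3) 4 y := by
      simpa using ((hasDerivAt_id y).const_mul (4:ℂ)).sub_const 3
    have h3 := (hasDerivAt_id y).mul (h1.pow 2)
    convert h3 using 1 <;> first | rfl | (norm_num; ring)
  have hgd : ∀ y, ‖y*(4*y-3)^2‖ < 1 →
      HasDerivAt (fun t : ℂ => ordinaryHypergeometric a b (1/2) (t*(4*t-3)^2))
        (deriv (HeunAux.F a b) (y*(4*y-3)^2) * (3*(4*y-3)*(4*y-1))) y := by
    intro y hy
    exact ((HeunAux.diffF a b hy).hasDerivAt).comp y (hpd y)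
  have hEev : deriv (fun t : ℂ => ordinaryHypergeometric a b (1/2) (t*(4*t-3)^2))
      =ᶠ[nhds x] (fun y => deriv (HeunAux.F a b) (y*(4*y-3)^2) * (3*(4*y-3)*(4*y-1))) := by
    refine Filter.eventuallyEq_of_mem
      (((isOpen_lt (by fun_prop) continuous_const)).mem_nhds hxU.1) ?_
    intro y hy
    exact (hgd y hy).deriv
  have hA : HasDerivAt (fun y : ℂ => deriv (HeunAux.F a b) (y*(4*y-3)^2))
      (deriv (deriv (HeunAux.F a b)) (x*(4*x-3)^2) * (3*(4*x-3)*(4*x-1))) x :=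
    by exact ((HeunAux.diffF1 a b hzx).hasDerivAt).comp x (hpd x)
  have hB : HasDerivAt (fun y : ℂ => 3*(4*y-3)*(4*y-1)) (96*x - 48) x := by
    have h1 : HasDerivAt (fun t : ℂ => 4*t-3) 4 x := by
      simpa using ((hasDerivAt_id x).const_mul (4:ℂ)).sub_const 3
    have h2 : HasDerivAt (fun t : ℂ => 4*t-1) 4 x := by
      simpa using ((hasDerivAt_id x).const_mul (4:ℂ)).sub_const 1
    have h3 := (h1.const_mul (3:ℂ)).mul h2
    convert h3 using 1 <;> first | rfl | ring
  have hprod := hA.mul hB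
  have hd2 : deriv (deriv (fun t : ℂ => ordinaryHypergeometric a b (1/2) (t*(4*t-3)^2))) x
      = deriv (deriv (HeunAux.F a b)) (x*(4*x-3)^2) * (3*(4*x-3)*(4*x-1)) * (3*(4*x-3)*(4*x-1))
        + deriv (HeunAux.F a b) (x*(4*x-3)^2) * (96*x - 48) := by
    rw [hEev.deriv_eq]
    exact hprod.deriv
  have hdiff2 : DifferentiableAt ℂ
      (deriv (fun t : ℂ => ordinaryHypergeometric a b (1/2) (t*(4*t-3)^2))) x :=
    (Filter.EventuallyEq.differentiableAt_iff hEev).mpr hprod.differentiableAt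
  have hode := HeunAux.ode a b hzx
  have hD : x*(x-1)*(x-1/4) ≠ 0 := mul_ne_zero (mul_ne_zero hx0 hX1) hX4
  refine ⟨(hgd x hzx).differentiableAt, hdiff2, ?_⟩
  rw [hd2, (hgd x hzx).deriv]
  have hgx : (fun x : ℂ => ordinaryHypergeometric a b (1/2) (x*(4*x-3)^2)) x
      = HeunAux.F a b (x*(4*x-3)^2) := rfl
  rw [hgx]
  rw [div_add_div _ _ hx0 hX1, div_add_div _ _ (mul_ne_zero hx0 hX1) hX4,
    div_mul_eq_mul_div, div_mul_eq_mul_div (3*a*(3*b)*x - 9*a*b/4) (x*(x-1)*(x-1/4))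
      (HeunAux.F a b (x*(4*x-3)^2)), add_assoc, ← add_div]
  refine HeunAux.clear_div _ _ _ hD ?_
  linear_combination (-9*(x-1/4)) * hode
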